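/- Let ν and ν̃ be probability measures on a measurable space with ν ≪ ν̃, let W be a measurable function with Z = E_ν[e^{-W}] ∈ (0,∞), and define the optimal proposal ν* by dν*/dν = e^{-W}/Z. Then the squared relative error of the importance sampling estimator, r²(ν̃) = Var_{ν̃}( e^{-W} · (dν/dν̃) ) / Z², equals the χ² divergence χ²(ν* | ν̃) = E_{ν̃}[(dν*/dν̃)² ] − 1. -/

import Mathlib

open MeasureTheory ProbabilityTheory Real

theorem importance_sampling_chi_sq {Ω : Type*} [MeasurableSpace Ω]
    (ν nut : Measure Ω) [IsProbabilityMeasure ν] [IsProbabilityMeasure nut]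
    (hac : ν ≪ nut) (W : Ω → ℝ) (hW : Measurable W)
    (Z : ℝ) (hZ : Z = ∫ x, Real.exp (-W x) ∂ν) (hZpos : 0 < Z)
    (νstar : Measure Ω)
    (hνstar : νstar = ν.withDensity (fun x => ENNReal.ofReal (Real.exp (-W x) / Z)))
    (hInt : Integrable (fun x => (Real.exp (-W x) * (ν.rnDeriv nut x).toReal) ^ 2) nut) :
    variance (fun x => Real.exp (-W x) * (ν.rnDeriv nut x).toReal) nut / Z ^ 2
      = (∫ x, ((νstar.rnDeriv nut x).toReal) ^ 2 ∂nut) - 1 := by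
  set f : Ω → ℝ := fun x => Real.exp (-W x) * (ν.rnDeriv nut x).toReal with hf
  have hfmeas : Measurable f :=
    ((hW.neg.exp).mul (ν.measurable_rnDeriv nut).ennreal_toReal)
  have hmem : MemLp f 2 nut :=
    (memLp_two_iff_integrable_sq hfmeas.aestronglyMeasurable).2 hInt
  -- mean of f is Z
  have hmean : ∫ x, f x ∂nut = Z := by
    rw [hZ]
    have := integral_rnDeriv_smul (μ := ν) hac (f := fun x => Real.exp (-W x))
    rw [← this]
    simp only [hf, smul_eq_mul]
    exact integral_congr_ae (Filter.Eventually.of_forall fun x => mul_comm _ _)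
  -- νstar as withDensity over nut
  have hg : Measurable (fun x => ENNReal.ofReal (Real.exp (-W x) / Z)) :=
    (hW.neg.exp.div_const Z).ennreal_ofReal
  have hνstar' : νstar = nut.withDensity
      (fun x => ν.rnDeriv nut x * ENNReal.ofReal (Real.exp (-W x) / Z)) := by
    rw [hνstar, show (fun x => ν.rnDeriv nut x * ENNReal.ofReal (Real.exp (-W x) / Z))
      = ν.rnDeriv nut * fun x => ENNReal.ofReal (Real.exp (-W x) / Z) from rfl,
      withDensity_mul _ (ν.measurable_rnDeriv nut) hg,
      Measure.withDensity_rnDeriv_eq ν nut hac]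
  have hrn : (fun x => νstar.rnDeriv nut x)
      =ᵐ[nut] fun x => ν.rnDeriv nut x * ENNReal.ofReal (Real.exp (-W x) / Z) := by
    rw [hνstar']
    exact Measure.rnDeriv_withDensity nut ((ν.measurable_rnDeriv nut).mul hg)
  have htoReal : (fun x => ((νstar.rnDeriv nut x).toReal) ^ 2)
      =ᵐ[nut] fun x => (f x / Z) ^ 2 := by
    filter_upwards [hrn] with x hx
    rw [hx, ENNReal.toReal_mul, ENNReal.toReal_ofReal (by positivity)]
    rw [hf]
    ring_nf
  have hint2 : ∫ x, ((νstar.rnDeriv nut x).toReal) ^ 2 ∂nut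
      = (∫ x, f x ^ 2 ∂nut) / Z ^ 2 := by
    rw [integral_congr_ae htoReal]
    simp_rw [div_pow]
    rw [integral_div]
  rw [variance_eq_sub hmem, hmean, hint2]
  field_simp
  rfl
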